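/- For every nonempty adversary A over a finite set Π, the maximum in the definition of setcon can be attained at a locally maximal live set: there exist S ∈ A with no S' ∈ A satisfying S ⊊ S', and a ∈ S, such that setcon(A) = 1 + setcon(A|_{S∖{a}}). -/

import Mathlib

variable {α : Type*} [DecidableEq α]

/-- The restriction `A|_P` of an adversary `A` to a set of processes `P`:
the live sets of `A` that are contained in `P`. -/
def restrict (A : Finset (Finset α)) (P : Finset α) : Finset (Finset α) :=
  A.filter fun S => S ⊆ P

/-- The set consensus power `setcon A` of an adversary `A`:
`setcon ∅ = 0` and, for `A ≠ ∅`,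
`setcon A = 1 + max_{S ∈ A} min_{a ∈ S} setcon (A|_{S \ {a}})`. -/
def setcon (A : Finset (Finset α)) : ℕ :=
  if A = ∅ then 0
  else 1 + A.attach.sup fun S =>
    (S.1.attach.image fun a => setcon (restrict A (S.1.erase a.1))).min.untopD 0
termination_by A.card
decreasing_by
  apply Finset.card_lt_card
  rw [Finset.ssubset_def]
  refine ⟨Finset.filter_subset _ _, fun hsub => ?_⟩
  have hmem := hsub S.2
  rw [restrict, Finset.mem_filter] at hmem
  exact Finset.notMem_erase a.1 S.1 (hmem.2 a.2)

/-- The restriction `A|_{P,Q}`: live sets of `A` contained in `P` that intersect `Q`. -/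
def restrictTo (A : Finset (Finset α)) (P Q : Finset α) : Finset (Finset α) :=
  (restrict A P).filter fun S => (S ∩ Q).Nonempty

/-- An adversary is fair if for all `P` and all `Q ⊆ P`,
`setcon (A|_{P,Q}) = min |Q| (setcon (A|_P))`. -/
def Fair (A : Finset (Finset α)) : Prop :=
  ∀ P Q : Finset α, Q ⊆ P →
    setcon (restrictTo A P Q) = min Q.card (setcon (restrict A P))

/-- `csize A`: the minimal cardinality of a hitting set of `A`, i.e. of a set
intersecting every live set of `A`. -/
noncomputable def csize (A : Finset (Finset α)) : ℕ :=
  sInf {k | ∃ H : Finset α, H.card = k ∧ ∀ S ∈ A, (H ∩ S).Nonempty}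

lemma setcon_eq (A : Finset (Finset α)) (h : A ≠ ∅) :
    setcon A = 1 + A.attach.sup fun S =>
      (S.1.attach.image fun a => setcon (restrict A (S.1.erase a.1))).min.untopD 0 := by
  rw [setcon, if_neg h]

lemma min_untop' {s : Finset ℕ} (h : s.Nonempty) : s.min.untopD 0 = s.min' h := by
  rw [← Finset.coe_min' h]; rfl

lemma restrict_mono_right (A : Finset (Finset α)) {P Q : Finset α} (h : P ⊆ Q) :
    restrict A P ⊆ restrict A Q := fun x hx => by
  rw [restrict, Finset.mem_filter] at *
  exact ⟨hx.1, hx.2.trans h⟩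

lemma restrict_mono_left {A B : Finset (Finset α)} (h : A ⊆ B) (P : Finset α) :
    restrict A P ⊆ restrict B P := Finset.filter_subset_filter _ h

lemma restrict_ssubset {B : Finset (Finset α)} {S : Finset α} (hS : S ∈ B) {a : α}
    (ha : a ∈ S) : restrict B (S.erase a) ⊂ B := by
  refine ⟨Finset.filter_subset _ _, fun hsub => ?_⟩
  have := hsub hS
  rw [restrict, Finset.mem_filter] at this
  exact Finset.notMem_erase a S (this.2 ha)

lemma setcon_mono (B : Finset (Finset α)) : ∀ A ⊆ B, setcon A ≤ setcon B := by
  induction B using Finset.strongInduction with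
  | _ B ih =>
    intro A hAB
    rcases eq_or_ne A ∅ with rfl | hA
    · rw [setcon, if_pos rfl]; exact Nat.zero_le _
    have hB : B ≠ ∅ := fun h => hA (Finset.subset_empty.mp (h ▸ hAB))
    rw [setcon_eq A hA, setcon_eq B hB]
    apply add_le_add_right
    apply Finset.sup_le
    rintro ⟨S, hS⟩ -
    have hSB : S ∈ B := hAB hS
    refine le_trans ?_ (Finset.le_sup (b := (⟨S, hSB⟩ : {x // x ∈ B})) (Finset.mem_attach _ _))
    simp only
    rcases S.eq_empty_or_nonempty with rfl | hSne
    · simp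
    obtain ⟨a, ha⟩ := hSne
    have hattne : S.attach.Nonempty := ⟨⟨a, ha⟩, Finset.mem_attach _ _⟩
    have hAne : (S.attach.image fun a => setcon (restrict A (S.erase a.1))).Nonempty :=
      hattne.image _
    have hBne : (S.attach.image fun a => setcon (restrict B (S.erase a.1))).Nonempty :=
      hattne.image _
    rw [min_untop' hAne, min_untop' hBne]
    obtain ⟨x, hx, hxeq⟩ := Finset.mem_image.mp (Finset.min'_mem _ hBne)
    refine le_trans (Finset.min'_le _ _ (Finset.mem_image_of_mem _ (Finset.mem_attach _ x))) ?_
    rw [← hxeq]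
    exact ih _ (restrict_ssubset hSB x.2) _ (restrict_mono_left hAB _)


/-- for a nonempty adversary, the max in the definition of `setcon`
can be attained at a locally maximal live set. -/
theorem setcon_attained_at_locally_maximal [Fintype α] (A : Finset (Finset α))
    (hA : A.Nonempty) (hne : ∀ S ∈ A, S.Nonempty) :
    ∃ S ∈ A, (¬ ∃ S' ∈ A, S ⊂ S') ∧
      ∃ a ∈ S, setcon A = 1 + setcon (restrict A (S.erase a)) := by
  classical
  set f : {x // x ∈ A} → ℕ := fun S =>
    (S.1.attach.image fun a => setcon (restrict A (S.1.erase a.1))).min.untopD 0 with hf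
  have hAne : A ≠ ∅ := hA.ne_empty
  have hattne : A.attach.Nonempty := hA.attach
  obtain ⟨S₀, -, hsup⟩ := Finset.exists_mem_eq_sup A.attach hattne f
  -- pick a maximal superset of S₀ in A
  have hTne : (A.filter fun t => S₀.1 ⊆ t).Nonempty :=
    ⟨S₀.1, Finset.mem_filter.mpr ⟨S₀.2, le_refl _⟩⟩
  obtain ⟨S, hST, hmax⟩ := Finset.exists_maximal hTne
  rw [Finset.mem_filter] at hST
  obtain ⟨hSA, hS₀S⟩ := hST
  refine ⟨S, hSA, ?_, ?_⟩
  · rintro ⟨S', hS'A, hSS'⟩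
    exact hSS'.2 (hmax (Finset.mem_filter.mpr ⟨hS'A, hS₀S.trans hSS'.subset⟩) hSS'.subset)
  -- S nonempty, min over S attained at some a₁
  obtain ⟨a₀', ha₀'⟩ := hne S₀.1 S₀.2
  obtain ⟨aS, haS⟩ := hne S hSA
  have hSattne : S.attach.Nonempty := ⟨⟨aS, haS⟩, Finset.mem_attach _ _⟩
  have hSimne : (S.attach.image fun a => setcon (restrict A (S.erase a.1))).Nonempty :=
    hSattne.image _
  obtain ⟨a₁, -, ha₁eq⟩ := Finset.mem_image.mp (Finset.min'_mem _ hSimne)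
  refine ⟨a₁.1, a₁.2, ?_⟩
  have hfS : f ⟨S, hSA⟩ = setcon (restrict A (S.erase a₁.1)) := by
    rw [hf]; simp only; rw [min_untop' hSimne, ha₁eq]
  -- f S₀ ≤ f S
  have hkey : f S₀ ≤ f ⟨S, hSA⟩ := by
    rw [hfS]
    set a₀ : α := if a₁.1 ∈ S₀.1 then a₁.1 else a₀' with ha₀def
    have ha₀ : a₀ ∈ S₀.1 := by
      rw [ha₀def]; split <;> [assumption; exact ha₀']
    have hsub : S₀.1.erase a₀ ⊆ S.erase a₁.1 := by
      rw [ha₀def]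
      split
      · exact Finset.erase_subset_erase _ hS₀S
      · exact (Finset.erase_subset _ _).trans
          ((Finset.subset_erase).mpr ⟨hS₀S, by assumption⟩)
    have h0attne : S₀.1.attach.Nonempty := ⟨⟨a₀, ha₀⟩, Finset.mem_attach _ _⟩
    have h0imne : (S₀.1.attach.image fun a => setcon (restrict A (S₀.1.erase a.1))).Nonempty :=
      h0attne.image _
    rw [hf]; simp only; rw [min_untop' h0imne]
    refine le_trans (Finset.min'_le _ _
      (Finset.mem_image_of_mem _ (Finset.mem_attach _ ⟨a₀, ha₀⟩))) ?_
    exact setcon_mono _ _ (restrict_mono_right A hsub)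
  have hfS_le : f ⟨S, hSA⟩ ≤ A.attach.sup f := Finset.le_sup (Finset.mem_attach _ _)
  have : A.attach.sup f = f ⟨S, hSA⟩ := le_antisymm (hsup ▸ hkey) hfS_le
  rw [setcon_eq A hAne, ← hf, this, hfS]
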